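/- Let K ⊊ L be a purely transcendental field extension (i.e., L = K(S) for some nonempty algebraically independent subset S of L over K) with #K ≥ 5. Then for every natural number m ≥ 1, the extension K ⊆ L fails to have the linear acyclic matching property at order m. -/

import Mathlib

section
variable {K L : Type*} [Field K] [Field L] [Algebra K L]

/-- A basis `v` of `A` is matched to a basis `w` of `B` if for every `b ∈ B` and
every `i`, `v i * b ∈ A` implies that `b` lies in the span of `w j`, `j ≠ i`. -/
def BasesMatched {n : ℕ} {A B : Submodule K L}
    (v : Module.Basis (Fin n) K A) (w : Module.Basis (Fin n) K B) : Prop :=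
  ∀ (b : B) (i : Fin n), (v i : L) * (b : L) ∈ A →
    b ∈ Submodule.span K (⇑w '' {j : Fin n | j ≠ i})

/-- `A` is matched with `B` if every basis of `A` can be matched to a basis of `B`. -/
def SubspaceMatched (n : ℕ) (A B : Submodule K L) : Prop :=
  ∀ v : Module.Basis (Fin n) K A, ∃ w : Module.Basis (Fin n) K B, BasesMatched v w

/-- The extension `K ⊆ L` has the linear matching property if for every `n ≥ 1` and
all `n`-dimensional subspaces `A`, `B` of `L` with `1 ∉ B`, `A` is matched with `B`. -/
def HasLinearMatchingProperty (K L : Type*) [Field K] [Field L] [Algebra K L] : Prop :=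
  ∀ n : ℕ, 1 ≤ n → ∀ A B : Submodule K L,
    Module.finrank K A = n → Module.finrank K B = n → (1 : L) ∉ B →
    SubspaceMatched n A B

/-- A strong matching from `A` to `B` is a linear isomorphism `φ : A → B` such that
every basis `v` of `A` is matched to the basis `φ ∘ v` of `B`. -/
def IsStrongMatching (n : ℕ) (A B : Submodule K L) (φ : A ≃ₗ[K] B) : Prop :=
  ∀ v : Module.Basis (Fin n) K A, BasesMatched v (v.map φ)

/-- Two strong matchings `f, g : A → B` are equivalent if there is a linear
isomorphism `φ : A → A` with `a * f a = φ a * g (φ a)` for all `a ∈ A`. -/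
def EquivStrongMatchings {A B : Submodule K L} (f g : A ≃ₗ[K] B) : Prop :=
  ∃ φ : A ≃ₗ[K] A, ∀ a : A, (a : L) * (f a : L) = (φ a : L) * (g (φ a) : L)

end

/-- The extension `K ⊆ L` fails to have the linear acyclic matching property at
order `m` if there are `m`-dimensional subspaces `A`, `B` of `L` and strong
matchings `f ≠ g` from `A` to `B` with `f ∼ g`. -/
def FailsLinearAcyclicAt (K L : Type*) [Field K] [Field L] [Algebra K L] (m : ℕ) : Prop :=
  ∃ (A B : Submodule K L) (f g : A ≃ₗ[K] B),
    Module.finrank K A = m ∧ Module.finrank K B = m ∧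
    IsStrongMatching m A B f ∧ IsStrongMatching m A B g ∧
    f ≠ g ∧ EquivStrongMatchings f g

open Polynomial

-- key auxiliary lemma: zero product property for the span of high powers
theorem aux_zero_prod {K L : Type*} [Field K] [Field L] [Algebra K L]
    (x : L) (hx : Transcendental K x) (m : ℕ)
    (A : Submodule K L)
    (hA : A = Submodule.span K (Set.range fun i : Fin m => x ^ (m + 1 + (i : ℕ))))
    {a b : L} (ha : a ∈ A) (hb : b ∈ A) (hane : a ≠ 0) (hab : a * b ∈ A) : b = 0 := by
  have hinj : Function.Injective (Polynomial.aeval x : K[X] →ₐ[K] L) :=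
    transcendental_iff_injective.mp hx
  set P : Fin m → K[X] := fun i => X ^ (m + 1 + (i : ℕ)) with hP
  have hmap : A = Submodule.map (Polynomial.aeval x).toLinearMap
      (Submodule.span K (Set.range P)) := by
    rw [hA, Submodule.map_span, ← Set.range_comp]
    have : (⇑(Polynomial.aeval x).toLinearMap ∘ P) = fun i : Fin m => x ^ (m + 1 + (i : ℕ)) := by
      funext i; simp [P]
    rw [this]
  have hsupp : ∀ p ∈ Submodule.span K (Set.range P),
      ∀ n ∈ p.support, m + 1 ≤ n ∧ n ≤ 2 * m := by
    intro p hp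
    induction hp using Submodule.span_induction with
    | mem p hp =>
      obtain ⟨i, rfl⟩ := hp
      intro n hn
      rw [Polynomial.support_X_pow _] at hn
      rw [Finset.mem_singleton] at hn
      subst hn
      have := i.2
      omega
    | zero => simp
    | add p q hp hq ihp ihq =>
      intro n hn
      rcases Finset.mem_union.mp (Polynomial.support_add hn) with h | h
      exacts [ihp n h, ihq n h]
    | smul c p hp ihp =>
      intro n hn
      exact ihp n (Polynomial.support_smul c p hn)
  rw [hmap] at ha hb hab
  obtain ⟨p, hpmem, hpa⟩ := ha
  obtain ⟨q, hqmem, hqb⟩ := hb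
  obtain ⟨r, hrmem, hrab⟩ := hab
  simp only [AlgHom.toLinearMap_apply] at hpa hqb hrab
  by_contra hbne
  have hq0 : q ≠ 0 := by rintro rfl; simp at hqb; exact hbne hqb.symm
  have hp0 : p ≠ 0 := by rintro rfl; simp at hpa; exact hane hpa.symm
  have hpq : p * q = r := by
    apply hinj
    rw [map_mul, hpa, hqb]
    exact hrab.symm
  have hr0 : r ≠ 0 := hpq ▸ mul_ne_zero hp0 hq0
  have h1 := (hsupp r hrmem _ (Polynomial.natTrailingDegree_mem_support_of_nonzero hr0)).2
  have h2 := (hsupp p hpmem _ (Polynomial.natTrailingDegree_mem_support_of_nonzero hp0)).1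
  have h3 := (hsupp q hqmem _ (Polynomial.natTrailingDegree_mem_support_of_nonzero hq0)).1
  rw [← hpq, Polynomial.natTrailingDegree_mul hp0 hq0] at h1
  omega


/-- If `K ⊊ L` is a purely transcendental extension (generated by a nonempty
algebraically independent set) with `#K ≥ 5`, then for every `m ≥ 1` the extension
fails to have the linear acyclic matching property at order `m`. -/
theorem stmt18 (K L : Type*) [Field K] [Field L] [Algebra K L]
    (S : Set L) (hSne : S.Nonempty)
    (hind : AlgebraicIndependent K ((↑) : S → L))
    (hgen : IntermediateField.adjoin K S = ⊤)
    (hK : 5 ≤ Cardinal.mk K) :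
    ∀ m : ℕ, 1 ≤ m → FailsLinearAcyclicAt K L m := by
  intro m hm
  obtain ⟨x, hxS⟩ := hSne
  have hx : Transcendental K x := hind.transcendental ⟨x, hxS⟩
  have hinj : Function.Injective (Polynomial.aeval x : K[X] →ₐ[K] L) :=
    transcendental_iff_injective.mp hx
  have hx0 : x ≠ 0 := by
    rintro rfl; exact hx isAlgebraic_zero
  -- pick d ∈ K with d ≠ 0, d ≠ 1, d ≠ -1
  obtain ⟨d, hd0, hd1, hdm1⟩ : ∃ d : K, d ≠ 0 ∧ d ≠ 1 ∧ d ≠ -1 := by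
    by_contra h
    push_neg at h
    have hsub : (Set.univ : Set K) ⊆ ({0, 1, -1} : Set K) := by
      intro c _
      rcases eq_or_ne c 0 with h0 | h0
      · exact Or.inl h0
      rcases eq_or_ne c 1 with h1 | h1
      · exact Or.inr (Or.inl h1)
      exact Or.inr (Or.inr (h c h0 h1))
    have hle : Cardinal.mk K ≤ 3 := by
      calc Cardinal.mk K = Cardinal.mk (Set.univ : Set K) := Cardinal.mk_univ.symm
        _ ≤ Cardinal.mk ({0, 1, -1} : Set K) := Cardinal.mk_le_mk_of_subset hsub
        _ ≤ Cardinal.mk ({1, -1} : Set K) + 1 := Cardinal.mk_insert_le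
        _ ≤ Cardinal.mk ({-1} : Set K) + 1 + 1 := by
            gcongr
            exact Cardinal.mk_insert_le
        _ = 3 := by rw [Cardinal.mk_singleton]; norm_num
    have : (5 : Cardinal) ≤ 3 := hK.trans hle
    norm_num at this
  -- the subspace
  set v : Fin m → L := fun i => x ^ (m + 1 + (i : ℕ)) with hv
  set A : Submodule K L := Submodule.span K (Set.range v) with hAdef
  -- linear independence
  have hliP : LinearIndependent K (fun i : Fin m => (X : K[X]) ^ (m + 1 + (i : ℕ))) := by
    rw [Fintype.linearIndependent_iff]
    intro g hg i
    have := congrArg (fun p => Polynomial.coeff p (m + 1 + (i : ℕ))) hg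
    simp only [Polynomial.finset_sum_coeff, Polynomial.coeff_smul, Polynomial.coeff_X_pow,
      Polynomial.coeff_zero, smul_eq_mul] at this
    rw [Finset.sum_eq_single i] at this
    · simpa using this
    · intro j _ hj
      have : ¬ (m + 1 + (i : ℕ) = m + 1 + (j : ℕ)) := by
        intro h; exact hj (Fin.ext (by omega))
      simp [this]
      intro h; exact absurd (Fin.ext h).symm hj
    · simp
  have hli : LinearIndependent K v := by
    have := hliP.map' (Polynomial.aeval x).toLinearMap
      (LinearMap.ker_eq_bot.mpr hinj)
    convert this using 1
    funext i
    simp [hv]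
    all_goals rfl
  have hA : Module.finrank K A = m := by
    rw [hAdef, finrank_span_eq_card hli, Fintype.card_fin]
  -- zero product
  have hzp : ∀ a ∈ A, ∀ b ∈ A, a ≠ 0 → a * b ∈ A → b = 0 := by
    intro a ha b hb hane hab
    exact aux_zero_prod x hx m A hAdef ha hb hane hab
  -- every isomorphism A ≃ A is a strong matching
  have hstrong : ∀ φ : A ≃ₗ[K] A, IsStrongMatching m A A φ := by
    intro φ; unfold IsStrongMatching BasesMatched; intro v0 b i hmem
    have hvne : ((v0 i : A) : L) ≠ 0 := by
      simpa [Submodule.coe_eq_zero] using v0.ne_zero i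
    have hb0 : (b : L) = 0 := hzp _ (v0 i).2 _ b.2 hvne hmem
    have : b = 0 := Subtype.ext hb0
    rw [this]
    exact Submodule.zero_mem _
  -- the maps
  set f : A ≃ₗ[K] A := LinearEquiv.refl K A with hf
  have hdd : (d * d)⁻¹ ≠ 0 := inv_ne_zero (mul_ne_zero hd0 hd0)
  set g : A ≃ₗ[K] A := LinearEquiv.smulOfNeZero K A ((d * d)⁻¹) hdd with hg
  set φ : A ≃ₗ[K] A := LinearEquiv.smulOfNeZero K A d hd0 with hφ
  -- nonzero element of A
  have hmem0 : v ⟨0, hm⟩ ∈ A := Submodule.subset_span ⟨⟨0, hm⟩, rfl⟩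
  set a0 : A := ⟨v ⟨0, hm⟩, hmem0⟩ with ha0
  have ha0ne : a0 ≠ 0 := by
    intro h
    have : v ⟨0, hm⟩ = 0 := congrArg Subtype.val h
    exact pow_ne_zero _ hx0 this
  have hddne1 : (d * d)⁻¹ ≠ 1 := by
    intro h
    have : d * d = 1 := by
      field_simp at h
      rw [← sq]; exact h.symm
    rcases mul_self_eq_one_iff.mp this with h1 | h1
    exacts [hd1 h1, hdm1 h1]
  refine ⟨A, A, f, g, hA, hA, hstrong f, hstrong g, ?_, ?_⟩
  · intro h
    have h1 : f a0 = g a0 := by rw [h]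
    have : a0 = (d * d)⁻¹ • a0 := h1
    have h2 : ((d * d)⁻¹ - 1) • a0 = 0 := by
      rw [sub_smul (R := K) (M := A), one_smul, ← this, sub_self]
    rcases smul_eq_zero.mp h2 with h3 | h3
    · exact hddne1 (sub_eq_zero.mp h3)
    · exact ha0ne h3
  · refine ⟨φ, fun a => ?_⟩
    show (a : L) * ((a : A) : L) = ((d • a : A) : L) * (((d * d)⁻¹ • (d • a) : A) : L)
    simp only [Submodule.coe_smul, smul_smul]
    rw [smul_mul_smul_comm]
    have : d * ((d * d)⁻¹ * d) = 1 := by field_simp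
    rw [this, one_smul]
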